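/- Let Y be a (p,k)-source, ε > 0, and let t, q be positive integers with t ≥ q and q ≤ k − log₂ t − 2·log₂(1/ε) − 5. Suppose f: {0,1}^p → {0,1}^q is sampled uniformly at random from a 2t-wise independent family of functions. Then f(Y) ≈_ε U_q holds with probability at least 1 − 2^{−t} over the choice of f. -/

import Mathlib

open Finset
open scoped Classical

/-- Bit strings of length `n`. -/
abbrev BS (n : ℕ) : Type := Fin n → Bool

/-- `p` is a probability mass function on the finite type `S`. -/
def IsDist {S : Type*} [Fintype S] (p : S → ℝ) : Prop :=
  (∀ s, 0 ≤ p s) ∧ ∑ s, p s = 1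

/-- Statistical distance between two distributions on `S`. -/
noncomputable def statDist {S : Type*} [Fintype S] (p q : S → ℝ) : ℝ :=
  (∑ s, |p s - q s|) / 2

/-- Pushforward of a distribution `p` on `S` along `f : S → T`. -/
noncomputable def push {S T : Type*} [Fintype S] [DecidableEq T] (f : S → T)
    (p : S → ℝ) : T → ℝ :=
  fun t => ∑ s, if f s = t then p s else 0

/-- The uniform distribution on `{0,1}^m`. -/
noncomputable def unif (m : ℕ) : BS m → ℝ := fun _ => 1 / 2 ^ m

/-- A finite family `F` of functions `{0,1}^p → {0,1}^q` is `t`-wise independent if,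
for a uniformly random member of `F`, the values at any `t` distinct points are
independent and uniformly distributed, i.e. every tuple of values occurs with
probability exactly `(2^q)^{-t}`. -/
def TwiseIndep (p q t : ℕ) (F : Finset (BS p → BS q)) : Prop :=
  F.Nonempty ∧
  ∀ xs : Fin t → BS p, Function.Injective xs → ∀ vs : Fin t → BS q,
    ((F.filter (fun f => ∀ i, f (xs i) = vs i)).card : ℝ) / (F.card : ℝ) =
      1 / ((2:ℝ) ^ q) ^ t


noncomputable def muq (q : ℕ) : ℝ := ((2:ℝ)^q)⁻¹

lemma expect_prod (p q n : ℕ) (F : Finset (BS p → BS q)) (hFne : F.Nonempty)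
    (hF2 : ∀ xs : Fin n → BS p, Function.Injective xs → ∀ vs : Fin n → BS q,
      ((F.filter (fun f => ∀ i, f (xs i) = vs i)).card : ℝ) / (F.card : ℝ) =
        1 / ((2:ℝ) ^ q) ^ n)
    (xs : Fin n → BS p) (hxs : Function.Injective xs) (h : Fin n → BS q → ℝ) :
    ∑ f ∈ F, ∏ i, h i (f (xs i)) = F.card * ∏ i, ((∑ v, h i v) / 2 ^ q) := by
  have hcard : (0:ℝ) < F.card := by
    exact_mod_cast Finset.card_pos.mpr hFne
  have key : ∀ vs : Fin n → BS q,
      ((F.filter (fun f => ∀ i, f (xs i) = vs i)).card : ℝ) =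
        F.card * (1 / ((2:ℝ) ^ q) ^ n) := by
    intro vs
    have := hF2 xs hxs vs
    field_simp at this ⊢
    linarith [this]
  calc ∑ f ∈ F, ∏ i, h i (f (xs i))
      = ∑ f ∈ F, ∑ vs ∈ Fintype.piFinset (fun _ : Fin n => (univ : Finset (BS q))),
          ∏ i, (if f (xs i) = vs i then h i (vs i) else 0) := by
        refine Finset.sum_congr rfl fun f _ => ?_
        have : ∏ i, h i (f (xs i)) =
            ∏ i, ∑ v ∈ (univ : Finset (BS q)), (if f (xs i) = v then h i v else 0) := by
          refine Finset.prod_congr rfl fun i _ => ?_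
          simp [Finset.sum_ite_eq]
        rw [this, Finset.prod_univ_sum]
    _ = ∑ vs ∈ Fintype.piFinset (fun _ : Fin n => (univ : Finset (BS q))),
          ∑ f ∈ F, ∏ i, (if f (xs i) = vs i then h i (vs i) else 0) :=
        Finset.sum_comm
    _ = ∑ vs ∈ Fintype.piFinset (fun _ : Fin n => (univ : Finset (BS q))),
          (∏ i, h i (vs i)) * ((F.filter (fun f => ∀ i, f (xs i) = vs i)).card : ℝ) := by
        refine Finset.sum_congr rfl fun vs _ => ?_
        have : ∀ f : BS p → BS q, (∏ i, (if f (xs i) = vs i then h i (vs i) else 0)) =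
            if (∀ i, f (xs i) = vs i) then ∏ i, h i (vs i) else 0 := by
          intro f
          by_cases hf : ∀ i, f (xs i) = vs i
          · simp [hf]
          · push_neg at hf
            obtain ⟨i, hi⟩ := hf
            rw [Finset.prod_eq_zero (Finset.mem_univ i) (by simp [hi]), if_neg]
            push_neg
            exact ⟨i, hi⟩
        simp only [this]
        rw [← Finset.sum_filter, Finset.sum_const, nsmul_eq_mul, mul_comm]
    _ = ∑ vs ∈ Fintype.piFinset (fun _ : Fin n => (univ : Finset (BS q))),
          (∏ i, h i (vs i)) * (F.card * (1 / ((2:ℝ) ^ q) ^ n)) := by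
        refine Finset.sum_congr rfl fun vs _ => ?_
        rw [key]
    _ = (F.card * (1 / ((2:ℝ) ^ q) ^ n)) *
          ∑ vs ∈ Fintype.piFinset (fun _ : Fin n => (univ : Finset (BS q))),
            ∏ i, h i (vs i) := by
        rw [Finset.mul_sum]
        exact Finset.sum_congr rfl fun vs _ => mul_comm _ _
    _ = (F.card * (1 / ((2:ℝ) ^ q) ^ n)) * ∏ i, ∑ v, h i v := by
        congr 1
        exact (Finset.prod_univ_sum _ _).symm
    _ = F.card * ∏ i, ((∑ v, h i v) / 2 ^ q) := by
        rw [Finset.prod_div_distrib, Finset.prod_const]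
        simp [Finset.card_univ]
        ring

lemma expect_prod_finset (p q n : ℕ) (F : Finset (BS p → BS q)) (hFne : F.Nonempty)
    (hF2 : ∀ xs : Fin n → BS p, Function.Injective xs → ∀ vs : Fin n → BS q,
      ((F.filter (fun f => ∀ i, f (xs i) = vs i)).card : ℝ) / (F.card : ℝ) =
        1 / ((2:ℝ) ^ q) ^ n)
    (hn : n ≤ Fintype.card (BS p)) (s : Finset (BS p)) (hs : s.card ≤ n)
    (h : BS p → BS q → ℝ) :
    ∑ f ∈ F, ∏ y ∈ s, h y (f y) = F.card * ∏ y ∈ s, ((∑ v, h y v) / 2 ^ q) := by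
  obtain ⟨s', hss', hcs'⟩ := Finset.exists_superset_card_eq hs hn
  have e : Fin n ≃ ↥s' := (finCongr hcs'.symm).trans s'.equivFin.symm
  set xs : Fin n → BS p := fun i => ((e i : ↥s') : BS p) with hxsdef
  have hxs : Function.Injective xs := fun i j hij => e.injective (Subtype.ext hij)
  have reindex : ∀ φ : BS p → ℝ, (∏ i, φ (xs i)) = ∏ y ∈ s', φ y := by
    intro φ
    rw [show (∏ i, φ (xs i)) = ∏ x : ↥s', φ ↑x from Equiv.prod_comp e (fun x => φ ↑x)]
    exact Finset.prod_coe_sort s' φ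
  have hinter : s' ∩ s = s := Finset.inter_eq_right.mpr hss'
  have main := expect_prod p q n F hFne hF2 xs hxs
    (fun i v => if xs i ∈ s then h (xs i) v else 1)
  calc ∑ f ∈ F, ∏ y ∈ s, h y (f y)
      = ∑ f ∈ F, ∏ i, (if xs i ∈ s then h (xs i) (f (xs i)) else 1) := by
        refine Finset.sum_congr rfl fun f _ => ?_
        rw [reindex (fun y => if y ∈ s then h y (f y) else 1),
          Finset.prod_ite_mem, hinter]
    _ = F.card * ∏ i, ((∑ v, (if xs i ∈ s then h (xs i) v else 1)) / 2 ^ q) := main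
    _ = F.card * ∏ i, (if xs i ∈ s then (∑ v, h (xs i) v) / 2 ^ q else 1) := by
        congr 1
        refine Finset.prod_congr rfl fun i _ => ?_
        by_cases hi : xs i ∈ s
        · simp [hi]
        · simp only [hi, if_false, Finset.sum_const, Finset.card_univ, nsmul_eq_mul, mul_one]
          rw [show Fintype.card (BS q) = 2 ^ q by simp [Fintype.card_fun]]
          norm_num
    _ = F.card * ∏ y ∈ s, ((∑ v, h y v) / 2 ^ q) := by
        rw [reindex (fun y => if y ∈ s then (∑ v, h y v) / 2 ^ q else 1),
          Finset.prod_ite_mem, hinter]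

noncomputable def Zc (q : ℕ) (z v : BS q) : ℝ := (if v = z then 1 else 0) - muq q

noncomputable def mexp (q : ℕ) (z : BS q) (j : ℕ) : ℝ := (∑ v, (Zc q z v) ^ j) / 2 ^ q

lemma card_BS (q : ℕ) : (Fintype.card (BS q)) = 2 ^ q := by simp [Fintype.card_fun]

lemma muq_pos (q : ℕ) : 0 < muq q := by
  rw [muq]; positivity

lemma muq_le_one (q : ℕ) : muq q ≤ 1 := by
  rw [muq]
  rw [inv_le_one_iff₀]
  right
  exact one_le_pow₀ (by norm_num)

lemma muq_mul (q : ℕ) : (2:ℝ) ^ q * muq q = 1 := by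
  rw [muq]; field_simp

lemma Zc_abs_le_one (q : ℕ) (z v : BS q) : |Zc q z v| ≤ 1 := by
  have h1 := muq_pos q
  have h2 := muq_le_one q
  rw [Zc]
  by_cases hv : v = z <;> simp [hv, abs_le] <;> constructor <;> linarith

lemma sum_Zc_sq (q : ℕ) (z : BS q) : ∑ v, (Zc q z v) ^ 2 = 1 - muq q := by
  have : ∀ v : BS q, (Zc q z v) ^ 2 =
      (muq q) ^ 2 + (if v = z then (1 - muq q) ^ 2 - (muq q) ^ 2 else 0) := by
    intro v
    by_cases hv : v = z <;> simp [Zc, hv] <;> ring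
  rw [Finset.sum_congr rfl (fun v _ => this v), Finset.sum_add_distrib,
    Finset.sum_const, Finset.sum_ite_eq' Finset.univ z, Finset.card_univ, card_BS]
  have hmul := muq_mul q
  simp only [Finset.mem_univ, if_true, nsmul_eq_mul]
  push_cast
  nlinarith [muq_pos q]

lemma mexp_one (q : ℕ) (z : BS q) : mexp q z 1 = 0 := by
  have : ∑ v, (Zc q z v) ^ 1 = 0 := by
    simp only [pow_one, Zc, Finset.sum_sub_distrib, Finset.sum_ite_eq' Finset.univ z,
      Finset.sum_const, Finset.card_univ, card_BS]
    have := muq_mul q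
    simp only [Finset.mem_univ, if_true, nsmul_eq_mul]
    push_cast
    linarith
  rw [mexp, this, zero_div]

lemma mexp_abs_le (q : ℕ) (z : BS q) (j : ℕ) (hj : 1 ≤ j) :
    |mexp q z j| ≤ muq q := by
  rcases eq_or_lt_of_le hj with h1 | h2
  · rw [← h1, mexp_one]
    simp [le_of_lt (muq_pos q)]
  · have hj2 : 2 ≤ j := h2
    have habs : |∑ v, (Zc q z v) ^ j| ≤ ∑ v, (Zc q z v) ^ 2 := by
      refine (Finset.abs_sum_le_sum_abs _ _).trans (Finset.sum_le_sum fun v _ => ?_)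
      rw [abs_pow]
      calc |Zc q z v| ^ j ≤ |Zc q z v| ^ 2 :=
            pow_le_pow_of_le_one (abs_nonneg _) (Zc_abs_le_one q z v) hj2
        _ = (Zc q z v) ^ 2 := by rw [sq_abs]
    rw [mexp, abs_div, abs_of_pos (by positivity : (0:ℝ) < 2 ^ q)]
    rw [div_le_iff₀ (by positivity : (0:ℝ) < 2 ^ q)]
    have := sum_Zc_sq q z
    have hmul := muq_mul q
    calc |∑ v, (Zc q z v) ^ j| ≤ 1 - muq q := by rw [← this]; exact habs
      _ ≤ 1 := by linarith [muq_pos q]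
      _ = muq q * 2 ^ q := by rw [mul_comm]; exact (muq_mul q).symm

noncomputable def multg {p n : ℕ} (g : Fin n → BS p) (y : BS p) : ℕ :=
  (Finset.univ.filter (fun i => g i = y)).card

lemma moment_g (p q t : ℕ) (F : Finset (BS p → BS q)) (hFne : F.Nonempty)
    (hF2 : ∀ xs : Fin (2*t) → BS p, Function.Injective xs → ∀ vs : Fin (2*t) → BS q,
      ((F.filter (fun f => ∀ i, f (xs i) = vs i)).card : ℝ) / (F.card : ℝ) =
        1 / ((2:ℝ) ^ q) ^ (2*t))
    (h2t : 2*t ≤ Fintype.card (BS p)) (z : BS q) (g : Fin (2*t) → BS p) :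
    ∑ f ∈ F, ∏ i, Zc q z (f (g i)) =
      F.card * ∏ y ∈ Finset.univ.image g, mexp q z (multg g y) := by
  have step1 : ∀ f : BS p → BS q, (∏ i, Zc q z (f (g i))) =
      ∏ y ∈ Finset.univ.image g, (Zc q z (f y)) ^ (multg g y) := by
    intro f
    rw [← Finset.prod_fiberwise_of_maps_to (fun i _ => Finset.mem_image_of_mem g (Finset.mem_univ i))
      (fun i => Zc q z (f (g i)))]
    refine Finset.prod_congr rfl fun y _ => ?_
    rw [multg, ← Finset.prod_const]
    refine Finset.prod_congr rfl fun i hi => ?_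
    rw [(Finset.mem_filter.mp hi).2]
  simp only [step1]
  have hcard : (Finset.univ.image g).card ≤ 2*t := by
    calc (Finset.univ.image g).card ≤ (Finset.univ : Finset (Fin (2*t))).card :=
          Finset.card_image_le
      _ = 2*t := by simp
  exact expect_prod_finset p q (2*t) F hFne hF2 h2t (Finset.univ.image g) hcard
    (fun y v => (Zc q z v) ^ (multg g y))

lemma mult_pos {p n : ℕ} (g : Fin n → BS p) (y : BS p) (hy : y ∈ Finset.univ.image g) :
    1 ≤ multg g y := by
  obtain ⟨i, _, hi⟩ := Finset.mem_image.mp hy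
  rw [multg, Nat.one_le_iff_ne_zero, Ne, Finset.card_eq_zero, ← Finset.not_nonempty_iff_eq_empty,
    not_not]
  exact ⟨i, Finset.mem_filter.mpr ⟨Finset.mem_univ i, hi⟩⟩

lemma moment_bound (p q t : ℕ) (F : Finset (BS p → BS q)) (hFne : F.Nonempty)
    (hF2 : ∀ xs : Fin (2*t) → BS p, Function.Injective xs → ∀ vs : Fin (2*t) → BS q,
      ((F.filter (fun f => ∀ i, f (xs i) = vs i)).card : ℝ) / (F.card : ℝ) =
        1 / ((2:ℝ) ^ q) ^ (2*t))
    (h2t : 2*t ≤ Fintype.card (BS p)) (z : BS q) (Y : BS p → ℝ) (hY0 : ∀ y, 0 ≤ Y y) :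
    ∑ f ∈ F, (∑ y, Y y * Zc q z (f y)) ^ (2*t) ≤
      F.card * ∑ g ∈ Finset.univ.filter
          (fun g : Fin (2*t) → BS p => ∀ y ∈ Finset.univ.image g, multg g y ≠ 1),
        (∏ i, Y (g i)) * (muq q) ^ ((Finset.univ.image g).card) := by
  have expand : ∀ f : BS p → BS q, (∑ y, Y y * Zc q z (f y)) ^ (2*t) =
      ∑ g : Fin (2*t) → BS p, ∏ i, (Y (g i) * Zc q z (f (g i))) := by
    intro f
    have : (∑ y, Y y * Zc q z (f y)) ^ (2*t) =
        ∏ _i : Fin (2*t), ∑ y ∈ Finset.univ, (Y y * Zc q z (f y)) := by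
      rw [Finset.prod_const, Finset.card_univ, Fintype.card_fin]
    rw [this, Finset.prod_univ_sum, Fintype.piFinset_univ]
  calc ∑ f ∈ F, (∑ y, Y y * Zc q z (f y)) ^ (2*t)
      = ∑ g : Fin (2*t) → BS p, ∑ f ∈ F, ∏ i, (Y (g i) * Zc q z (f (g i))) := by
        simp only [expand]
        exact Finset.sum_comm
    _ = ∑ g : Fin (2*t) → BS p, (∏ i, Y (g i)) *
          (F.card * ∏ y ∈ Finset.univ.image g, mexp q z (multg g y)) := by
        refine Finset.sum_congr rfl fun g _ => ?_
        simp only [Finset.prod_mul_distrib, ← Finset.mul_sum]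
        rw [moment_g p q t F hFne hF2 h2t z g]
    _ ≤ F.card * ∑ g ∈ Finset.univ.filter
          (fun g : Fin (2*t) → BS p => ∀ y ∈ Finset.univ.image g, multg g y ≠ 1),
        (∏ i, Y (g i)) * (muq q) ^ ((Finset.univ.image g).card) := by
        rw [← Finset.sum_filter_add_sum_filter_not Finset.univ
          (fun g : Fin (2*t) → BS p => ∀ y ∈ Finset.univ.image g, multg g y ≠ 1),
          Finset.mul_sum]
        have hzero : ∑ g ∈ Finset.univ.filter
            (fun g : Fin (2*t) → BS p => ¬ ∀ y ∈ Finset.univ.image g, multg g y ≠ 1),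
            (∏ i, Y (g i)) * (F.card * ∏ y ∈ Finset.univ.image g, mexp q z (multg g y)) = 0 := by
          refine Finset.sum_eq_zero fun g hg => ?_
          obtain ⟨y, hy, hy1⟩ := by
            have := (Finset.mem_filter.mp hg).2
            push_neg at this
            exact this
          have : ∏ y ∈ Finset.univ.image g, mexp q z (multg g y) = 0 :=
            Finset.prod_eq_zero hy (by rw [hy1]; exact mexp_one q z)
          rw [this]; ring
        rw [hzero, add_zero]
        refine Finset.sum_le_sum fun g hg => ?_
        have hYg : 0 ≤ ∏ i, Y (g i) := Finset.prod_nonneg fun i _ => hY0 (g i)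
        have hprod : ∏ y ∈ Finset.univ.image g, mexp q z (multg g y) ≤
            (muq q) ^ ((Finset.univ.image g).card) := by
          calc ∏ y ∈ Finset.univ.image g, mexp q z (multg g y)
              ≤ |∏ y ∈ Finset.univ.image g, mexp q z (multg g y)| := le_abs_self _
            _ = ∏ y ∈ Finset.univ.image g, |mexp q z (multg g y)| := Finset.abs_prod _ _
            _ ≤ ∏ _y ∈ Finset.univ.image g, muq q :=
                Finset.prod_le_prod (fun y _ => abs_nonneg _)
                  (fun y hy => mexp_abs_le q z _ (mult_pos g y hy))
            _ = (muq q) ^ ((Finset.univ.image g).card) := Finset.prod_const _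
        calc (∏ i, Y (g i)) * (F.card * ∏ y ∈ Finset.univ.image g, mexp q z (multg g y))
            ≤ (∏ i, Y (g i)) * (F.card * (muq q) ^ ((Finset.univ.image g).card)) := by
              refine mul_le_mul_of_nonneg_left ?_ hYg
              exact mul_le_mul_of_nonneg_left hprod (Nat.cast_nonneg _)
          _ = F.card * ((∏ i, Y (g i)) * (muq q) ^ ((Finset.univ.image g).card)) := by ring

lemma min'_congr' {α : Type*} [LinearOrder α] {s t : Finset α} (h : s = t) (hs : s.Nonempty) :
    s.min' hs = t.min' (h ▸ hs) := by subst h; rfl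

noncomputable def ldr {p n : ℕ} (g : Fin n → BS p) (i : Fin n) : Fin n :=
  (Finset.univ.filter (fun j => g j = g i)).min' ⟨i, by simp⟩

lemma g_ldr {p n : ℕ} (g : Fin n → BS p) (i : Fin n) : g (ldr g i) = g i := by
  have h := Finset.min'_mem (Finset.univ.filter (fun j => g j = g i)) ⟨i, by simp⟩
  exact (Finset.mem_filter.mp h).2

lemma ldr_congr {p n : ℕ} (g : Fin n → BS p) {i j : Fin n} (h : g i = g j) :
    ldr g i = ldr g j := by
  have hset : (Finset.univ.filter fun a => g a = g i) =
      (Finset.univ.filter fun a => g a = g j) := by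
    refine Finset.filter_congr fun x _ => ?_
    rw [h]
  exact min'_congr' hset _

lemma ldr_ldr {p n : ℕ} (g : Fin n → BS p) (i : Fin n) : ldr g (ldr g i) = ldr g i :=
  ldr_congr g (g_ldr g i)

noncomputable def FixS {p n : ℕ} (g : Fin n → BS p) : Finset (Fin n) :=
  Finset.univ.filter (fun i => ldr g i = i)

lemma card_FixS_eq {p n : ℕ} (g : Fin n → BS p) :
    (FixS g).card = (Finset.univ.image g).card := by
  refine Finset.card_bij (fun i _ => g i) ?_ ?_ ?_
  · intro i _
    exact Finset.mem_image_of_mem g (Finset.mem_univ i)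
  · intro i₁ h₁ i₂ h₂ hg
    have e₁ := (Finset.mem_filter.mp h₁).2
    have e₂ := (Finset.mem_filter.mp h₂).2
    calc i₁ = ldr g i₁ := e₁.symm
      _ = ldr g i₂ := ldr_congr g hg
      _ = i₂ := e₂
  · intro y hy
    obtain ⟨j, _, hj⟩ := Finset.mem_image.mp hy
    refine ⟨ldr g j, Finset.mem_filter.mpr ⟨Finset.mem_univ _, ldr_ldr g j⟩, ?_⟩
    show g (ldr g j) = y
    rw [g_ldr g j, hj]

lemma card_image_le_t {p t : ℕ} (g : Fin (2*t) → BS p)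
    (hg : ∀ y ∈ Finset.univ.image g, multg g y ≠ 1) :
    (Finset.univ.image g).card ≤ t := by
  have h1 : 2 * t = ∑ y ∈ Finset.univ.image g, multg g y := by
    have := Finset.card_eq_sum_card_fiberwise
      (fun i (_ : i ∈ (Finset.univ : Finset (Fin (2*t)))) =>
        Finset.mem_image_of_mem g (Finset.mem_univ i))
    simpa [multg] using this
  have h2 : (Finset.univ.image g).card * 2 ≤ ∑ y ∈ Finset.univ.image g, multg g y := by
    rw [← smul_eq_mul, ← Finset.sum_const]
    refine Finset.sum_le_sum fun y hy => ?_
    have := mult_pos g y hy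
    have := hg y hy
    omega
  omega

lemma pow_balance (t m : ℕ) (a b : ℝ) (ha : 0 ≤ a) (hab : a ≤ b) (hm : m ≤ t) :
    a ^ (2*t - m) * b ^ m ≤ a ^ t * b ^ t := by
  have hb : 0 ≤ b := le_trans ha hab
  have he : 2*t - m = t + (t - m) := by omega
  rw [he, pow_add, mul_assoc]
  refine mul_le_mul_of_nonneg_left ?_ (pow_nonneg ha t)
  calc a ^ (t - m) * b ^ m ≤ b ^ (t - m) * b ^ m :=
        mul_le_mul_of_nonneg_right (pow_le_pow_left₀ ha hab _) (pow_nonneg hb m)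
    _ = b ^ t := by rw [← pow_add]; congr 1; omega

lemma counting (p t : ℕ) (Y : BS p → ℝ) (hY0 : ∀ y, 0 ≤ Y y) (hY1 : ∑ y, Y y = 1)
    (N μ : ℝ) (hN0 : 0 ≤ N) (hμ0 : 0 ≤ μ) (hsrc : ∀ y, Y y ≤ N)
    (haμ : (2*t : ℝ) * N ≤ μ) :
    ∑ g ∈ Finset.univ.filter
        (fun g : Fin (2*t) → BS p => ∀ y ∈ Finset.univ.image g, multg g y ≠ 1),
      (∏ i, Y (g i)) * μ ^ ((Finset.univ.image g).card) ≤
      (2:ℝ)^(2*t) * (((2*t:ℝ) * N)^t * μ^t) := by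
  classical
  set y0 : BS p := (fun _ => false) with hy0
  set G := Finset.univ.filter
      (fun g : Fin (2*t) → BS p => ∀ y ∈ Finset.univ.image g, multg g y ≠ 1) with hG
  set PS : Finset (Finset (Fin (2*t))) := Finset.univ.filter (fun s => s.card ≤ t) with hPS
  set W3 : Finset (Fin (2*t)) × ((Fin (2*t) → Fin (2*t)) × (Fin (2*t) → BS p)) → ℝ :=
    fun d => (if ∀ i ∈ d.1, d.2.1 i = i then (1:ℝ) else 0) *
      (N ^ (2*t - d.1.card) * μ ^ d.1.card *
        ∏ i, (if i ∈ d.1 then Y (d.2.2 i) else (if d.2.2 i = y0 then (1:ℝ) else 0))) with hW3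
  set Φ : (Fin (2*t) → BS p) →
      Finset (Fin (2*t)) × ((Fin (2*t) → Fin (2*t)) × (Fin (2*t) → BS p)) :=
    fun g => (FixS g, (ldr g, fun i => if ldr g i = i then g i else y0)) with hΦ
  have hW3nonneg : ∀ d, 0 ≤ W3 d := by
    intro d
    refine mul_nonneg (by positivity) (mul_nonneg (by positivity) ?_)
    refine Finset.prod_nonneg fun i _ => ?_
    by_cases h1 : i ∈ d.1
    · simp only [h1, if_true]; exact hY0 _
    · simp only [h1, if_false]; positivity
  have hrec : ∀ (g : Fin (2*t) → BS p) (i : Fin (2*t)),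
      (fun j => if ldr g j = j then g j else y0) (ldr g i) = g i := by
    intro g i
    simp only [ldr_ldr g i, if_true]
    exact g_ldr g i
  have hΦinj : ∀ g₁ g₂ : Fin (2*t) → BS p, Φ g₁ = Φ g₂ → g₁ = g₂ := by
    intro g₁ g₂ h
    simp only [hΦ, Prod.mk.injEq] at h
    funext i
    have h1 := hrec g₁ i
    have h2 := hrec g₂ i
    rw [← h1, h.2.2, h.2.1]
    exact h2
  have hper : ∀ g ∈ G, (∏ i, Y (g i)) * μ ^ ((Finset.univ.image g).card) ≤ W3 (Φ g) := by
    intro g hg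
    have hfix : ∀ i ∈ FixS g, ldr g i = i := fun i hi => (Finset.mem_filter.mp hi).2
    have hind : (if ∀ i ∈ (Φ g).1, (Φ g).2.1 i = i then (1:ℝ) else 0) = 1 := if_pos hfix
    have hprodeq : (∏ i, (if i ∈ (Φ g).1 then Y ((Φ g).2.2 i)
        else (if (Φ g).2.2 i = y0 then (1:ℝ) else 0))) = ∏ i ∈ FixS g, Y (g i) := by
      have : ∀ i : Fin (2*t), (if i ∈ (Φ g).1 then Y ((Φ g).2.2 i)
          else (if (Φ g).2.2 i = y0 then (1:ℝ) else 0)) =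
          (if i ∈ FixS g then Y (g i) else 1) := by
        intro i
        by_cases hi : i ∈ FixS g
        · have := hfix i hi
          simp only [hΦ, hi, if_true, this]
        · have hnl : ¬ (ldr g i = i) := by
            intro hc
            exact hi (Finset.mem_filter.mpr ⟨Finset.mem_univ i, hc⟩)
          simp only [hΦ, hi, if_false, hnl, if_true]
      rw [Finset.prod_congr rfl (fun i _ => this i), Finset.prod_ite_mem,
        Finset.univ_inter]
    have hsplit : (∏ i ∈ (Finset.univ : Finset (Fin (2*t))) \ FixS g, Y (g i)) *
        ∏ i ∈ FixS g, Y (g i) = ∏ i, Y (g i) :=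
      Finset.prod_sdiff (Finset.subset_univ _)
    have hcard : ((Finset.univ : Finset (Fin (2*t))) \ FixS g).card = 2*t - (FixS g).card := by
      rw [Finset.card_sdiff_of_subset (Finset.subset_univ _), Finset.card_univ, Fintype.card_fin]
    have hbound : (∏ i ∈ (Finset.univ : Finset (Fin (2*t))) \ FixS g, Y (g i)) ≤
        N ^ (2*t - (FixS g).card) := by
      rw [← hcard, ← Finset.prod_const]
      exact Finset.prod_le_prod (fun i _ => hY0 _) (fun i _ => hsrc _)
    have hcardim : (Finset.univ.image g).card = (FixS g).card := (card_FixS_eq g).symm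
    rw [hW3]
    simp only [hind, one_mul]
    show (∏ i, Y (g i)) * μ ^ ((Finset.univ.image g).card) ≤
      N ^ (2*t - (Φ g).1.card) * μ ^ (Φ g).1.card * _
    rw [hprodeq]
    show (∏ i, Y (g i)) * μ ^ ((Finset.univ.image g).card) ≤
      N ^ (2*t - (FixS g).card) * μ ^ (FixS g).card * ∏ i ∈ FixS g, Y (g i)
    rw [hcardim, ← hsplit]
    have hYfix : (0:ℝ) ≤ ∏ i ∈ FixS g, Y (g i) := Finset.prod_nonneg fun i _ => hY0 _
    calc (∏ i ∈ (Finset.univ : Finset (Fin (2*t))) \ FixS g, Y (g i)) *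
          (∏ i ∈ FixS g, Y (g i)) * μ ^ (FixS g).card
        ≤ N ^ (2*t - (FixS g).card) * (∏ i ∈ FixS g, Y (g i)) * μ ^ (FixS g).card := by
          refine mul_le_mul_of_nonneg_right ?_ (pow_nonneg hμ0 _)
          exact mul_le_mul_of_nonneg_right hbound hYfix
      _ = N ^ (2*t - (FixS g).card) * μ ^ (FixS g).card * ∏ i ∈ FixS g, Y (g i) := by ring
  have hmem : ∀ g ∈ G, Φ g ∈ PS ×ˢ ((Finset.univ : Finset (Fin (2*t) → Fin (2*t))) ×ˢ
      (Finset.univ : Finset (Fin (2*t) → BS p))) := by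
    intro g hg
    refine Finset.mem_product.mpr ⟨?_, Finset.mem_product.mpr ⟨Finset.mem_univ _, Finset.mem_univ _⟩⟩
    rw [hPS, Finset.mem_filter]
    refine ⟨Finset.mem_univ _, ?_⟩
    rw [show (Φ g).1 = FixS g from rfl, card_FixS_eq g]
    exact card_image_le_t g (by simpa [hG] using (Finset.mem_filter.mp hg).2)
  calc ∑ g ∈ G, (∏ i, Y (g i)) * μ ^ ((Finset.univ.image g).card)
      ≤ ∑ g ∈ G, W3 (Φ g) := Finset.sum_le_sum hper
    _ = ∑ d ∈ G.image Φ, W3 d :=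
        (Finset.sum_image (fun g₁ _ g₂ _ h => hΦinj g₁ g₂ h)).symm
    _ ≤ ∑ d ∈ PS ×ˢ ((Finset.univ : Finset (Fin (2*t) → Fin (2*t))) ×ˢ
          (Finset.univ : Finset (Fin (2*t) → BS p))), W3 d := by
        refine Finset.sum_le_sum_of_subset_of_nonneg ?_ (fun d _ _ => hW3nonneg d)
        intro d hd
        obtain ⟨g, hg, rfl⟩ := Finset.mem_image.mp hd
        exact hmem g hg
    _ ≤ (2:ℝ)^(2*t) * (((2*t:ℝ) * N)^t * μ^t) := by
        rw [Finset.sum_product]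
        have hinner : ∀ s ∈ PS, (∑ x ∈ (Finset.univ : Finset (Fin (2*t) → Fin (2*t))) ×ˢ
            (Finset.univ : Finset (Fin (2*t) → BS p)), W3 (s, x)) ≤ ((2*t:ℝ) * N)^t * μ^t := by
          intro s hs
          have hscard : s.card ≤ t := (Finset.mem_filter.mp hs).2
          rw [Finset.sum_product]
          have husum : (∑ u : Fin (2*t) → BS p,
              ∏ i, (if i ∈ s then Y (u i) else (if u i = y0 then (1:ℝ) else 0))) = 1 := by
            rw [show (Finset.univ : Finset (Fin (2*t) → BS p)) =
              Fintype.piFinset (fun _ => Finset.univ) from (Fintype.piFinset_univ).symm]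
            have hpu := Finset.prod_univ_sum (fun _ : Fin (2*t) => (Finset.univ : Finset (BS p)))
              (fun i v => if i ∈ s then Y v else if v = y0 then (1:ℝ) else 0)
            rw [← hpu]
            refine Finset.prod_eq_one fun i _ => ?_
            by_cases hi : i ∈ s
            · simp only [hi, if_true]; exact hY1
            · simp only [hi, if_false]
              rw [Finset.sum_ite_eq' Finset.univ y0 (fun _ => (1:ℝ))]
              simp
          have hcount : ((Finset.univ.filter
              (fun ρ : Fin (2*t) → Fin (2*t) => ∀ i ∈ s, ρ i = i)).card : ℝ) ≤
              (2*t : ℝ) ^ (2*t - s.card) := by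
            have hnat : (Finset.univ.filter
                (fun ρ : Fin (2*t) → Fin (2*t) => ∀ i ∈ s, ρ i = i)).card ≤
                (2*t) ^ (2*t - s.card) := by
              have := Finset.card_le_card_of_injOn
                (s := Finset.univ.filter (fun ρ : Fin (2*t) → Fin (2*t) => ∀ i ∈ s, ρ i = i))
                (f := fun ρ : Fin (2*t) → Fin (2*t) =>
                  (fun i : ↥((Finset.univ : Finset (Fin (2*t))) \ s) => ρ ↑i))
                (t := (Finset.univ : Finset (↥((Finset.univ : Finset (Fin (2*t))) \ s) → Fin (2*t))))
                (fun ρ _ => Finset.mem_univ _) ?_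
              · calc (Finset.univ.filter
                    (fun ρ : Fin (2*t) → Fin (2*t) => ∀ i ∈ s, ρ i = i)).card
                    ≤ (Finset.univ : Finset (↥((Finset.univ : Finset (Fin (2*t))) \ s)
                        → Fin (2*t))).card := this
                  _ = (2*t) ^ (2*t - s.card) := by
                      rw [Finset.card_univ, Fintype.card_fun, Fintype.card_coe,
                        Finset.card_sdiff_of_subset (Finset.subset_univ _), Finset.card_univ,
                        Fintype.card_fin]
              · intro ρ₁ h₁ ρ₂ h₂ hres
                have hh₁ : ∀ i ∈ s, ρ₁ i = i := by
                  simpa using (Finset.mem_coe.mp h₁)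
                have hh₂ : ∀ i ∈ s, ρ₂ i = i := by
                  simpa using (Finset.mem_coe.mp h₂)
                funext i
                by_cases hi : i ∈ s
                · rw [hh₁ i hi, hh₂ i hi]
                · have hmem : i ∈ (Finset.univ : Finset (Fin (2*t))) \ s :=
                    Finset.mem_sdiff.mpr ⟨Finset.mem_univ i, hi⟩
                  exact congrFun hres ⟨i, hmem⟩
            calc ((Finset.univ.filter
                (fun ρ : Fin (2*t) → Fin (2*t) => ∀ i ∈ s, ρ i = i)).card : ℝ)
                ≤ (((2*t) ^ (2*t - s.card) : ℕ) : ℝ) := by exact_mod_cast hnat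
              _ = (2*t : ℝ) ^ (2*t - s.card) := by push_cast; ring
          calc (∑ ρ : Fin (2*t) → Fin (2*t), ∑ u : Fin (2*t) → BS p, W3 (s, (ρ, u)))
              = (∑ ρ : Fin (2*t) → Fin (2*t),
                  (if ∀ i ∈ s, ρ i = i then (1:ℝ) else 0)) *
                  (N ^ (2*t - s.card) * μ ^ s.card) := by
                rw [Finset.sum_mul]
                refine Finset.sum_congr rfl fun ρ _ => ?_
                rw [hW3]
                show (∑ u : Fin (2*t) → BS p, (if ∀ i ∈ s, ρ i = i then (1:ℝ) else 0) *
                    (N ^ (2*t - s.card) * μ ^ s.card *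
                    ∏ i, (if i ∈ s then Y (u i) else (if u i = y0 then (1:ℝ) else 0)))) = _
                rw [← Finset.mul_sum, ← Finset.mul_sum, husum, mul_one]
              _ = ((Finset.univ.filter
                    (fun ρ : Fin (2*t) → Fin (2*t) => ∀ i ∈ s, ρ i = i)).card : ℝ) *
                  (N ^ (2*t - s.card) * μ ^ s.card) := by
                congr 1
                rw [Finset.sum_boole]
              _ ≤ (2*t : ℝ) ^ (2*t - s.card) * (N ^ (2*t - s.card) * μ ^ s.card) := by
                refine mul_le_mul_of_nonneg_right hcount ?_
                positivity
              _ = ((2*t:ℝ) * N) ^ (2*t - s.card) * μ ^ s.card := by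
                rw [mul_pow]; ring
              _ ≤ ((2*t:ℝ) * N)^t * μ^t :=
                pow_balance t s.card _ _ (by positivity) haμ hscard
        calc (∑ s ∈ PS, ∑ x ∈ (Finset.univ : Finset (Fin (2*t) → Fin (2*t))) ×ˢ
              (Finset.univ : Finset (Fin (2*t) → BS p)), W3 (s, x))
            ≤ ∑ _s ∈ PS, ((2*t:ℝ) * N)^t * μ^t := Finset.sum_le_sum hinner
          _ = PS.card * (((2*t:ℝ) * N)^t * μ^t) := by
              rw [Finset.sum_const, nsmul_eq_mul]
          _ ≤ (2:ℝ)^(2*t) * (((2*t:ℝ) * N)^t * μ^t) := by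
              refine mul_le_mul_of_nonneg_right ?_ (by positivity)
              calc (PS.card : ℝ) ≤ (Fintype.card (Finset (Fin (2*t))) : ℝ) := by
                    exact_mod_cast Finset.card_le_univ PS
                _ = (2:ℝ)^(2*t) := by
                    rw [Fintype.card_finset, Fintype.card_fin]; push_cast; ring

lemma push_sub_mu (p q : ℕ) (f : BS p → BS q) (Y : BS p → ℝ) (hY1 : ∑ y, Y y = 1)
    (z : BS q) : push f Y z - muq q = ∑ y, Y y * Zc q z (f y) := by
  simp only [Zc, mul_sub, Finset.sum_sub_distrib, ← Finset.sum_mul, hY1, one_mul, push]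
  congr 1
  refine Finset.sum_congr rfl fun y _ => ?_
  by_cases hy : f y = z <;> simp [hy]

lemma sum_push (p q : ℕ) (f : BS p → BS q) (Y : BS p → ℝ) (hY1 : ∑ y, Y y = 1) :
    ∑ z, push f Y z = 1 := by
  simp only [push]
  rw [Finset.sum_comm]
  rw [← hY1]
  refine Finset.sum_congr rfl fun y _ => ?_
  rw [Finset.sum_ite_eq (Finset.univ) (f y) (fun _ => Y y)]
  simp

lemma push_nonneg (p q : ℕ) (f : BS p → BS q) (Y : BS p → ℝ) (hY0 : ∀ y, 0 ≤ Y y)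
    (z : BS q) : 0 ≤ push f Y z := by
  refine Finset.sum_nonneg fun y _ => ?_
  by_cases hy : f y = z <;> simp [hy, hY0 y]

lemma statDist_formula_le (p q : ℕ) (f : BS p → BS q) (Y : BS p → ℝ) (ε : ℝ) (hε : 0 ≤ ε)
    (h : ∀ z, |push f Y z - muq q| ≤ 2 * ε * muq q) :
    (∑ z, |push f Y z - 1 / 2 ^ q|) / 2 ≤ ε := by
  have hmul := muq_mul q
  have h2 : ∀ z : BS q, |push f Y z - 1 / 2 ^ q| ≤ 2 * ε * muq q := by
    intro z
    rw [one_div]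
    exact h z
  calc (∑ z, |push f Y z - 1 / 2 ^ q|) / 2
      ≤ (∑ _z : BS q, 2 * ε * muq q) / 2 := by
        gcongr with z hz
        exact h2 z
    _ = ε := by
        rw [Finset.sum_const, Finset.card_univ, card_BS, nsmul_eq_mul]
        push_cast
        calc ((2:ℝ)^q) * (2 * ε * muq q) / 2 = ε * ((2:ℝ)^q * muq q) := by ring
          _ = ε := by rw [hmul, mul_one]

lemma statDist_push_le_one (p q : ℕ) (f : BS p → BS q) (Y : BS p → ℝ)
    (hY0 : ∀ y, 0 ≤ Y y) (hY1 : ∑ y, Y y = 1) :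
    (∑ z, |push f Y z - 1 / 2 ^ q|) / 2 ≤ 1 := by
  have hb : (0:ℝ) ≤ 1 / 2 ^ q := by positivity
  have hsum : ∑ z, |push f Y z - 1 / 2 ^ q| ≤
      ∑ z, (push f Y z + 1 / 2 ^ q) := by
    refine Finset.sum_le_sum fun z _ => ?_
    have ha := push_nonneg p q f Y hY0 z
    rw [abs_le]
    constructor <;> [linarith; linarith]
  have htot : ∑ z, (push f Y z + 1 / 2 ^ q) = 2 := by
    rw [Finset.sum_add_distrib, sum_push p q f Y hY1, Finset.sum_const,
      Finset.card_univ, card_BS, nsmul_eq_mul]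
    push_cast
    rw [show ((2:ℝ)^q * (1/2^q)) = 1 by field_simp]
    norm_num
  linarith

lemma key_arith (q t : ℕ) (k ε : ℝ) (hε : 0 < ε) (ht : 0 < t)
    (hk : (q:ℝ) ≤ k - Real.logb 2 (t:ℝ) - 2 * Real.logb 2 (1 / ε) - 5) :
    32 * (t:ℝ) * (2:ℝ) ^ (-k) ≤ ε ^ 2 * muq q := by
  have htpos : (0:ℝ) < t := by exact_mod_cast ht
  have hεinv : (0:ℝ) < 1 / ε := by positivity
  have hexp : -k ≤ -(q:ℝ) + (-Real.logb 2 (t:ℝ)) + (Real.logb 2 (1/ε) * (-2)) + (-5) := by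
    linarith
  have hmono := Real.rpow_le_rpow_of_exponent_le (by norm_num : (1:ℝ) ≤ 2) hexp
  have e1 : (2:ℝ) ^ (-(q:ℝ)) = muq q := by
    rw [Real.rpow_neg (by norm_num), Real.rpow_natCast, muq]
  have e2 : (2:ℝ) ^ (-Real.logb 2 (t:ℝ)) = (t:ℝ)⁻¹ := by
    rw [Real.rpow_neg (by norm_num), Real.rpow_logb two_pos (by norm_num) htpos]
  have e3 : (2:ℝ) ^ (Real.logb 2 (1/ε) * (-2:ℝ)) = ε^2 := by
    rw [Real.rpow_mul (by norm_num), Real.rpow_logb two_pos (by norm_num) hεinv]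
    rw [show ((-2):ℝ) = -((2:ℕ):ℝ) by norm_num, Real.rpow_neg (le_of_lt hεinv),
      Real.rpow_natCast, one_div, inv_pow, inv_inv]
  have e4 : (2:ℝ) ^ ((-5):ℝ) = 1/32 := by
    rw [show ((-5):ℝ) = -((5:ℕ):ℝ) by norm_num, Real.rpow_neg (by norm_num),
      Real.rpow_natCast]
    norm_num
  rw [Real.rpow_add two_pos, Real.rpow_add two_pos, Real.rpow_add two_pos, e1, e2, e3, e4]
    at hmono
  have hrw : 32 * (t:ℝ) * (muq q * (t:ℝ)⁻¹ * ε^2 * (1/32)) = ε^2 * muq q := by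
    field_simp
  calc 32 * (t:ℝ) * (2:ℝ) ^ (-k) ≤ 32 * (t:ℝ) * (muq q * (t:ℝ)⁻¹ * ε^2 * (1/32)) := by
        refine mul_le_mul_of_nonneg_left hmono (by positivity)
    _ = ε^2 * muq q := hrw

/-- A function sampled from a `2t`-wise independent family with
`q ≤ k - log₂ t - 2·log₂(1/ε) - 5` and `t ≥ q` extracts from a fixed `(p,k)`-source `Y`
with error `ε`, with probability at least `1 - 2^{-t}` over the choice of `f`. -/
theorem twise_function_extracts
    (p q t : ℕ) (k ε : ℝ) (Y : BS p → ℝ)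
    (hY : IsDist Y) (hsrc : ∀ y, Y y ≤ (2:ℝ) ^ (-k)) (hε : 0 < ε)
    (hq : 0 < q) (ht : 0 < t) (htq : q ≤ t)
    (hk : (q:ℝ) ≤ k - Real.logb 2 (t:ℝ) - 2 * Real.logb 2 (1 / ε) - 5)
    (F : Finset (BS p → BS q)) (hF : TwiseIndep p q (2 * t) F) :
    1 - (2:ℝ) ^ (-(t:ℝ)) ≤
      ((F.filter (fun f => statDist (push f Y) (unif q) ≤ ε)).card : ℝ) /
        (F.card : ℝ) := by
  obtain ⟨hY0, hY1⟩ := hY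
  obtain ⟨hFne, hF2⟩ := hF
  have hFcard : (0:ℝ) < F.card := by exact_mod_cast Finset.card_pos.mpr hFne
  have hrpow_pos : (0:ℝ) < (2:ℝ) ^ (-(t:ℝ)) := Real.rpow_pos_of_pos (by norm_num) _
  have hstat : ∀ f : BS p → BS q, statDist (push f Y) (unif q) =
      (∑ z, |push f Y z - 1 / 2 ^ q|) / 2 := fun f => rfl
  by_cases hε1 : (1:ℝ) ≤ ε
  · have hall : ∀ f ∈ F, statDist (push f Y) (unif q) ≤ ε := by
      intro f _
      rw [hstat f]
      exact le_trans (statDist_push_le_one p q f Y hY0 hY1) hε1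
    rw [Finset.filter_true_of_mem hall, div_self (ne_of_gt hFcard)]
    linarith
  · push_neg at hε1
    have htpos : (0:ℝ) < t := by exact_mod_cast ht
    obtain ⟨N, hN⟩ : ∃ x : ℝ, x = (2:ℝ) ^ (-k) := ⟨_, rfl⟩
    rw [← hN] at hsrc
    have hN0 : 0 < N := hN ▸ Real.rpow_pos_of_pos (by norm_num) _
    obtain ⟨μ, hμ⟩ : ∃ x : ℝ, x = muq q := ⟨_, rfl⟩
    have hμ0 : 0 < μ := hμ ▸ muq_pos q
    have hμ1 : μ ≤ 1 := hμ ▸ muq_le_one q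
    have hε2 : ε ^ 2 ≤ 1 := by nlinarith
    have hKey : 32 * (t:ℝ) * N ≤ ε ^ 2 * μ := by
      rw [hN, hμ]
      exact key_arith q t k ε hε ht hk
    have haμ : 2 * (t:ℝ) * N ≤ μ := by nlinarith [mul_pos htpos hN0]
    have h2t : 2 * t ≤ Fintype.card (BS p) := by
      rw [card_BS]
      have hsum : (1:ℝ) ≤ (2:ℝ)^p * N := by
        calc (1:ℝ) = ∑ y, Y y := hY1.symm
          _ ≤ ∑ _y : BS p, N := Finset.sum_le_sum fun y _ => hsrc y
          _ = (2:ℝ)^p * N := by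
              rw [Finset.sum_const, Finset.card_univ, card_BS, nsmul_eq_mul]
              push_cast
              ring
      have h1 : 32 * (t:ℝ) * N ≤ 1 := by nlinarith
      have h2 : (2 * t : ℝ) ≤ (2:ℝ)^p := by nlinarith [mul_pos htpos hN0]
      have h3 : ((2 * t : ℕ) : ℝ) ≤ (((2:ℕ)^p : ℕ) : ℝ) := by push_cast; linarith
      exact_mod_cast h3
    obtain ⟨δ, hδ⟩ : ∃ x : ℝ, x = 2 * ε * μ := ⟨_, rfl⟩
    have hδ0 : 0 < δ := by rw [hδ]; positivity
    have hδpow : (0:ℝ) < δ ^ (2*t) := by positivity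
    obtain ⟨a, ha⟩ : ∃ x : ℝ, x = 2 * (t:ℝ) * N := ⟨_, rfl⟩
    have ha0 : 0 ≤ a := by rw [ha]; positivity
    have haμ' : a ≤ μ := by rw [ha]; exact haμ
    have hBadz : ∀ z : BS q,
        ((F.filter (fun f => δ < |push f Y z - μ|)).card : ℝ) * δ ^ (2*t) ≤
          (F.card : ℝ) * ((2:ℝ)^(2*t) * (a^t * μ^t)) := by
      intro z
      have hmom := moment_bound p q t F hFne hF2 h2t z Y hY0
      have hcnt := counting p t Y hY0 hY1 N (muq q) (le_of_lt hN0) (le_of_lt (muq_pos q))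
        hsrc (hμ ▸ haμ)
      rw [← hμ, ← ha] at hcnt
      rw [← hμ] at hmom
      have hlow : ((F.filter (fun f => δ < |push f Y z - μ|)).card : ℝ) * δ ^ (2*t) ≤
          ∑ f ∈ F, (∑ y, Y y * Zc q z (f y)) ^ (2*t) := by
        have hsubf : F.filter (fun f => δ < |push f Y z - μ|) ⊆ F := Finset.filter_subset _ _
        calc ((F.filter (fun f => δ < |push f Y z - μ|)).card : ℝ) * δ ^ (2*t)
            = ∑ _f ∈ F.filter (fun f => δ < |push f Y z - μ|), δ ^ (2*t) := by
              rw [Finset.sum_const, nsmul_eq_mul]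
          _ ≤ ∑ f ∈ F.filter (fun f => δ < |push f Y z - μ|),
                (∑ y, Y y * Zc q z (f y)) ^ (2*t) := by
              refine Finset.sum_le_sum fun f hf => ?_
              have hWf : δ ≤ |push f Y z - μ| :=
                le_of_lt (Finset.mem_filter.mp hf).2
              calc δ ^ (2*t) ≤ |push f Y z - μ| ^ (2*t) :=
                    pow_le_pow_left₀ (le_of_lt hδ0) hWf _
                _ = |(push f Y z - μ) ^ (2*t)| := pow_abs _ _
                _ = (push f Y z - μ) ^ (2*t) :=
                    abs_of_nonneg ((even_two_mul t).pow_nonneg _)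
                _ = (∑ y, Y y * Zc q z (f y)) ^ (2*t) := by
                    rw [hμ, push_sub_mu p q f Y hY1 z]
          _ ≤ ∑ f ∈ F, (∑ y, Y y * Zc q z (f y)) ^ (2*t) := by
              refine Finset.sum_le_sum_of_subset_of_nonneg hsubf fun f _ _ => ?_
              exact (even_two_mul t).pow_nonneg _
      calc ((F.filter (fun f => δ < |push f Y z - μ|)).card : ℝ) * δ ^ (2*t)
          ≤ ∑ f ∈ F, (∑ y, Y y * Zc q z (f y)) ^ (2*t) := hlow
        _ ≤ (F.card : ℝ) * ∑ g ∈ Finset.univ.filter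
              (fun g : Fin (2*t) → BS p => ∀ y ∈ Finset.univ.image g, multg g y ≠ 1),
              (∏ i, Y (g i)) * μ ^ ((Finset.univ.image g).card) := hmom
        _ ≤ (F.card : ℝ) * ((2:ℝ)^(2*t) * (a^t * μ^t)) :=
            mul_le_mul_of_nonneg_left hcnt (le_of_lt hFcard)
    set Bad := F.filter (fun f => ¬ statDist (push f Y) (unif q) ≤ ε) with hBadDef
    have hsub : Bad ⊆ Finset.univ.biUnion
        (fun z : BS q => F.filter (fun f => δ < |push f Y z - μ|)) := by
      intro f hf
      obtain ⟨hfF, hfb⟩ := Finset.mem_filter.mp hf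
      by_contra hc
      simp only [Finset.mem_biUnion, Finset.mem_univ, true_and, not_exists] at hc
      have hforall : ∀ z : BS q, |push f Y z - muq q| ≤ 2 * ε * muq q := by
        intro z
        have hz := hc z
        rw [Finset.mem_filter] at hz
        push_neg at hz
        have := hz hfF
        rw [hμ] at this
        rw [hδ, hμ] at this
        exact this
      exact hfb (by
        rw [hstat f]
        exact statDist_formula_le p q f Y ε (le_of_lt hε) hforall)
    have hBadCard : (Bad.card : ℝ) ≤
        (2:ℝ)^q * ((F.card : ℝ) * ((2:ℝ)^(2*t) * (a^t * μ^t)) / δ ^ (2*t)) := by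
      have hnat : Bad.card ≤ ∑ z : BS q,
          (F.filter (fun f => δ < |push f Y z - μ|)).card :=
        le_trans (Finset.card_le_card hsub) (Finset.card_biUnion_le)
      have hcast : (Bad.card : ℝ) ≤ ∑ z : BS q,
          ((F.filter (fun f => δ < |push f Y z - μ|)).card : ℝ) := by
        exact_mod_cast hnat
      calc (Bad.card : ℝ)
          ≤ ∑ z : BS q, ((F.filter (fun f => δ < |push f Y z - μ|)).card : ℝ) := hcast
        _ ≤ ∑ _z : BS q, (F.card : ℝ) * ((2:ℝ)^(2*t) * (a^t * μ^t)) / δ ^ (2*t) := by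
            refine Finset.sum_le_sum fun z _ => ?_
            rw [le_div_iff₀ hδpow]
            exact hBadz z
        _ = (2:ℝ)^q * ((F.card : ℝ) * ((2:ℝ)^(2*t) * (a^t * μ^t)) / δ ^ (2*t)) := by
            rw [Finset.sum_const, Finset.card_univ, card_BS, nsmul_eq_mul]
            push_cast
            ring
    have h2a : 2 * a ≤ (ε^2 * μ) / 2 := by
      rw [ha]
      have : (0:ℝ) ≤ t * N := le_of_lt (mul_pos htpos hN0)
      nlinarith
    have hpowkey : (2:ℝ)^q * ((2:ℝ)^(2*t) * (a^t * μ^t)) ≤ ((2:ℝ)^t)⁻¹ * δ ^ (2*t) := by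
      have hq2t : (2:ℝ)^q ≤ (2:ℝ)^t := pow_le_pow_right₀ (by norm_num) htq
      have hstep1 : (2:ℝ)^q * ((2:ℝ)^(2*t) * (a^t * μ^t)) ≤
          (2:ℝ)^(2*t) * ((2*a)^t * μ^t) := by
        calc (2:ℝ)^q * ((2:ℝ)^(2*t) * (a^t * μ^t))
            ≤ (2:ℝ)^t * ((2:ℝ)^(2*t) * (a^t * μ^t)) :=
              mul_le_mul_of_nonneg_right hq2t (by positivity)
          _ = (2:ℝ)^(2*t) * ((2*a)^t * μ^t) := by
              rw [mul_pow (2:ℝ) a t]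
              ring
      have hstep2 : (2:ℝ)^(2*t) * ((2*a)^t * μ^t) ≤
          (2:ℝ)^(2*t) * (((ε^2 * μ)/2)^t * μ^t) := by
        refine mul_le_mul_of_nonneg_left ?_ (by positivity)
        refine mul_le_mul_of_nonneg_right ?_ (by positivity)
        exact pow_le_pow_left₀ (by positivity) h2a t
      have h2tne : ((2:ℝ)^t) ≠ 0 := by positivity
      have hstep3 : (2:ℝ)^(2*t) * (((ε^2 * μ)/2)^t * μ^t) = ((2:ℝ)^t)⁻¹ * δ ^ (2*t) := by
        rw [hδ]
        field_simp
        rw [pow_mul, pow_mul, ← mul_pow, ← mul_pow, ← mul_pow]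
        congr 1
        ring
      linarith
    have hBadFinal : (Bad.card : ℝ) ≤ (F.card : ℝ) * ((2:ℝ)^t)⁻¹ := by
      calc (Bad.card : ℝ)
          ≤ (2:ℝ)^q * ((F.card : ℝ) * ((2:ℝ)^(2*t) * (a^t * μ^t)) / δ ^ (2*t)) := hBadCard
        _ = (F.card : ℝ) * ((2:ℝ)^q * ((2:ℝ)^(2*t) * (a^t * μ^t)) / δ ^ (2*t)) := by ring
        _ ≤ (F.card : ℝ) * ((2:ℝ)^t)⁻¹ := by
            refine mul_le_mul_of_nonneg_left ?_ (le_of_lt hFcard)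
            rw [div_le_iff₀ hδpow]
            calc (2:ℝ)^q * ((2:ℝ)^(2*t) * (a^t * μ^t)) ≤ ((2:ℝ)^t)⁻¹ * δ ^ (2*t) := hpowkey
              _ = ((2:ℝ)^t)⁻¹ * δ ^ (2*t) := rfl
    have hGoodBad : ((F.filter (fun f => statDist (push f Y) (unif q) ≤ ε)).card : ℝ) +
        (Bad.card : ℝ) = (F.card : ℝ) := by
      rw [hBadDef]
      exact_mod_cast Finset.card_filter_add_card_filter_not
        (p := fun f => statDist (push f Y) (unif q) ≤ ε)
    have h2negt : (2:ℝ) ^ (-(t:ℝ)) = ((2:ℝ)^t)⁻¹ := by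
      rw [Real.rpow_neg (by norm_num), Real.rpow_natCast]
    rw [le_div_iff₀ hFcard, h2negt]
    have hgoal : (1 - ((2:ℝ)^t)⁻¹) * (F.card : ℝ) =
        (F.card : ℝ) - (F.card : ℝ) * ((2:ℝ)^t)⁻¹ := by ring
    linarith [hBadFinal, hGoodBad, hgoal]
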